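/- Every ReLU-activated encoder block is a cubic spline: if α : ℝ^{n×p} → ℝ^{mh×p} is an h-headed ReLU attention module and φ : ℝ^{mh×p} → ℝ^{n'×p} is a ReLU feed-forward neural network applied columnwise, then the encoder block ε = φ ∘ α : ℝ^{n×p} → ℝ^{n'×p} is a matrix-valued spline of degree 3. -/

import Mathlib

noncomputable section

open Matrix

/-- The rectified linear unit. -/
def relu (x : ℝ) : ℝ := max x 0

/-- Entrywise ReLU of a matrix. -/
def matRelu {a b : ℕ} (M : Matrix (Fin a) (Fin b) ℝ) : Matrix (Fin a) (Fin b) ℝ :=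
  Matrix.of fun i j => relu (M i j)

/-- A continuous function `f : ℝ^ι → ℝ` is a (polynomial) spline of degree `k` if there are
polynomials `π_1, …, π_b`, each of total degree at most `k`, such that on every (nonempty) cell
of the induced semialgebraic sign partition, `f` agrees with a polynomial of degree at most `k`. -/
def IsSpline (ι : Type) [Fintype ι] (k : ℕ) (f : (ι → ℝ) → ℝ) : Prop :=
  Continuous f ∧
  ∃ (b : ℕ) (π : Fin b → MvPolynomial ι ℝ),
    (∀ i, (π i).totalDegree ≤ k) ∧
    ∀ θ : Fin b → SignType,
      ∃ ξ : MvPolynomial ι ℝ, ξ.totalDegree ≤ k ∧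
        ∀ x : ι → ℝ, (∀ i, SignType.sign (MvPolynomial.eval x (π i)) = θ i) →
          f x = MvPolynomial.eval x ξ

/-- A matrix-variate, matrix-valued function is a spline of degree `k` if each coordinate
function, regarded as a function of the entries of the input matrix, is a spline of degree `k`. -/
def IsMatrixSpline {n p m q : ℕ} (k : ℕ)
    (f : Matrix (Fin n) (Fin p) ℝ → Matrix (Fin m) (Fin q) ℝ) : Prop :=
  ∀ (i : Fin m) (j : Fin q),
    IsSpline (Fin n × Fin p) k (fun x => f (Matrix.of fun a b => x (a, b)) i j)

/-- The ReLU-activated attention module `α(X) = (A_V X + B_V) · ReLU((A_K X + B_K)ᵀ (A_Q X + B_Q))`. -/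
def attention {n p d m : ℕ}
    (AQ AK : Matrix (Fin d) (Fin n) ℝ) (AV : Matrix (Fin m) (Fin n) ℝ)
    (BQ BK : Matrix (Fin d) (Fin p) ℝ) (BV : Matrix (Fin m) (Fin p) ℝ)
    (X : Matrix (Fin n) (Fin p) ℝ) : Matrix (Fin m) (Fin p) ℝ :=
  (AV * X + BV) * matRelu ((AK * X + BK)ᵀ * (AQ * X + BQ))

/-- An `h`-headed ReLU attention module: `h` attention modules stacked vertically, giving a map
`ℝ^{n×p} → ℝ^{hm×p}`. -/
def multiheadAttention {n p d m h : ℕ}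
    (AQ AK : Fin h → Matrix (Fin d) (Fin n) ℝ) (AV : Fin h → Matrix (Fin m) (Fin n) ℝ)
    (BQ BK : Fin h → Matrix (Fin d) (Fin p) ℝ) (BV : Fin h → Matrix (Fin m) (Fin p) ℝ)
    (X : Matrix (Fin n) (Fin p) ℝ) : Matrix (Fin (h * m)) (Fin p) ℝ :=
  Matrix.of fun i j =>
    attention (AQ (finProdFinEquiv.symm i).1) (AK (finProdFinEquiv.symm i).1)
      (AV (finProdFinEquiv.symm i).1) (BQ (finProdFinEquiv.symm i).1)
      (BK (finProdFinEquiv.symm i).1) (BV (finProdFinEquiv.symm i).1) X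
      (finProdFinEquiv.symm i).2 j

/-- ReLU feed-forward neural networks `φ(x) = A_{l+1} σ_l A_l ⋯ σ_1 A_1 x + b_{l+1}`, where
`σ_i(x) = ReLU(x + b_i)` coordinatewise: the base case is an affine map, and each additional
layer precomposes with `x ↦ ReLU(A x + b)`. -/
inductive IsNN : ∀ {a b : ℕ}, ((Fin a → ℝ) → (Fin b → ℝ)) → Prop
  | affine {a b : ℕ} (A : Matrix (Fin b) (Fin a) ℝ) (c : Fin b → ℝ) :
      IsNN (fun x => A.mulVec x + c)
  | layer {a b c : ℕ} (A : Matrix (Fin b) (Fin a) ℝ) (v : Fin b → ℝ)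
      {g : (Fin b → ℝ) → (Fin c → ℝ)} (hg : IsNN g) :
      IsNN (fun x => g (fun i => relu (A.mulVec x i + v i)))

/-- Apply a map `φ : ℝ^a → ℝ^c` columnwise to a matrix `X ∈ ℝ^{a×p}`. -/
def colwise {a c p : ℕ} (φ : (Fin a → ℝ) → (Fin c → ℝ))
    (X : Matrix (Fin a) (Fin p) ℝ) : Matrix (Fin c) (Fin p) ℝ :=
  Matrix.of fun i j => φ (fun r => X r j) i

variable {ι : Type} [Fintype ι] {k k₁ k₂ : ℕ} {f g : (ι → ℝ) → ℝ}

lemma isSpline_of (hc : Continuous f)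
    (J : Type) [Fintype J] (π : J → MvPolynomial ι ℝ)
    (hdeg : ∀ j, (π j).totalDegree ≤ k)
    (h : ∀ θ : J → SignType, ∃ ξ : MvPolynomial ι ℝ, ξ.totalDegree ≤ k ∧
      ∀ x : ι → ℝ, (∀ j, SignType.sign (MvPolynomial.eval x (π j)) = θ j) →
        f x = MvPolynomial.eval x ξ) :
    IsSpline ι k f := by
  refine ⟨hc, Fintype.card J, fun i => π ((Fintype.equivFin J).symm i), fun i => hdeg _, ?_⟩
  intro θ
  obtain ⟨ξ, hξ, hx⟩ := h (fun j => θ (Fintype.equivFin J j))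
  exact ⟨ξ, hξ, fun x hs => hx x (fun j => by simpa using hs (Fintype.equivFin J j))⟩

lemma isSpline_poly (ξ : MvPolynomial ι ℝ) (hξ : ξ.totalDegree ≤ k) :
    IsSpline ι k (fun x => MvPolynomial.eval x ξ) := by
  refine isSpline_of ξ.continuous_eval Empty (fun e => e.elim) (fun e => e.elim) ?_
  exact fun θ => ⟨ξ, hξ, fun x _ => rfl⟩

lemma isSpline_const (c : ℝ) : IsSpline ι k fun _ => c := by
  simpa using isSpline_poly (MvPolynomial.C c) (by simp)

lemma IsSpline.add (hf : IsSpline ι k f) (hg : IsSpline ι k g) :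
    IsSpline ι k fun x => f x + g x := by
  obtain ⟨hcf, b₁, π₁, hd₁, h₁⟩ := hf
  obtain ⟨hcg, b₂, π₂, hd₂, h₂⟩ := hg
  refine isSpline_of (hcf.add hcg) (Fin b₁ ⊕ Fin b₂) (Sum.elim π₁ π₂) ?_ ?_
  · rintro (j | j) <;> simp [hd₁, hd₂]
  · intro θ
    obtain ⟨ξ₁, hξ₁, hx₁⟩ := h₁ (θ ∘ Sum.inl)
    obtain ⟨ξ₂, hξ₂, hx₂⟩ := h₂ (θ ∘ Sum.inr)
    refine ⟨ξ₁ + ξ₂, le_trans (MvPolynomial.totalDegree_add _ _) (by simp [hξ₁, hξ₂]), ?_⟩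
    intro x hs
    rw [MvPolynomial.eval_add, hx₁ x fun j => hs (Sum.inl j), hx₂ x fun j => hs (Sum.inr j)]

lemma IsSpline.mul (hf : IsSpline ι k₁ f) (hg : IsSpline ι k₂ g) :
    IsSpline ι (k₁ + k₂) fun x => f x * g x := by
  obtain ⟨hcf, b₁, π₁, hd₁, h₁⟩ := hf
  obtain ⟨hcg, b₂, π₂, hd₂, h₂⟩ := hg
  refine isSpline_of (hcf.mul hcg) (Fin b₁ ⊕ Fin b₂) (Sum.elim π₁ π₂) ?_ ?_
  · rintro (j | j)
    · exact le_trans (hd₁ j) (Nat.le_add_right _ _)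
    · exact le_trans (hd₂ j) (Nat.le_add_left _ _)
  · intro θ
    obtain ⟨ξ₁, hξ₁, hx₁⟩ := h₁ (θ ∘ Sum.inl)
    obtain ⟨ξ₂, hξ₂, hx₂⟩ := h₂ (θ ∘ Sum.inr)
    refine ⟨ξ₁ * ξ₂, le_trans (MvPolynomial.totalDegree_mul _ _) (add_le_add hξ₁ hξ₂), ?_⟩
    intro x hs
    rw [MvPolynomial.eval_mul, hx₁ x fun j => hs (Sum.inl j), hx₂ x fun j => hs (Sum.inr j)]

lemma IsSpline.mono (hkk : k₁ ≤ k₂) (hf : IsSpline ι k₁ f) : IsSpline ι k₂ f := by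
  obtain ⟨hcf, b, π, hd, h⟩ := hf
  refine ⟨hcf, b, π, fun i => le_trans (hd i) hkk, fun θ => ?_⟩
  obtain ⟨ξ, hξ, hx⟩ := h θ
  exact ⟨ξ, le_trans hξ hkk, hx⟩

lemma IsSpline.const_mul (c : ℝ) (hf : IsSpline ι k f) : IsSpline ι k fun x => c * f x :=
  by simpa using (isSpline_const (k := 0) c).mul hf

lemma isSpline_sum {γ : Type*} (s : Finset γ) (F : γ → (ι → ℝ) → ℝ)
    (h : ∀ i ∈ s, IsSpline ι k (F i)) : IsSpline ι k fun x => ∑ i ∈ s, F i x := by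
  classical
  induction s using Finset.induction with
  | empty => simpa using isSpline_const 0
  | insert _ _ hni ih =>
    rename_i a s
    simp only [Finset.sum_insert hni]
    exact (h a (Finset.mem_insert_self a s)).add
      (ih fun i hi => h i (Finset.mem_insert_of_mem hi))

lemma continuous_relu : Continuous relu := continuous_id.max continuous_const

lemma IsSpline.relu (hf : IsSpline ι k f) : IsSpline ι k fun x => relu (f x) := by
  classical
  obtain ⟨hcf, b, π, hd, h⟩ := hf
  choose ξ hξdeg hξ using h
  refine isSpline_of (continuous_relu.comp hcf)
    (Fin b ⊕ ((Fin b → SignType))) (Sum.elim π ξ) ?_ ?_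
  · rintro (j | t)
    · exact hd j
    · exact hξdeg t
  · intro θ
    set t : Fin b → SignType := θ ∘ Sum.inl with ht
    rcases hτ : θ (Sum.inr t) with _ | _ | _
    · -- sign = 0
      refine ⟨0, by simp, fun x hs => ?_⟩
      have hfx : f x = MvPolynomial.eval x (ξ t) := hξ t x fun j => hs (Sum.inl j)
      have h0 : MvPolynomial.eval x (ξ t) = 0 := by
        have := hs (Sum.inr t); rw [hτ] at this
        rwa [show SignType.zero = (0 : SignType) from rfl, sign_eq_zero_iff] at this
      simp [_root_.relu, hfx, h0]
    · -- sign = -1 : relu f = 0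
      refine ⟨0, by simp, fun x hs => ?_⟩
      have hfx : f x = MvPolynomial.eval x (ξ t) := hξ t x fun j => hs (Sum.inl j)
      have hneg : MvPolynomial.eval x (ξ t) < 0 := by
        have := hs (Sum.inr t); rw [hτ] at this
        rwa [show SignType.neg = (-1 : SignType) from rfl, sign_eq_neg_one_iff] at this
      simp [_root_.relu, hfx, max_eq_right (le_of_lt hneg)]
    · -- sign = 1
      refine ⟨ξ t, hξdeg t, fun x hs => ?_⟩
      have hfx : f x = MvPolynomial.eval x (ξ t) := hξ t x fun j => hs (Sum.inl j)
      have hpos : 0 < MvPolynomial.eval x (ξ t) := by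
        have := hs (Sum.inr t); rw [hτ] at this
        rwa [show SignType.pos = (1 : SignType) from rfl, sign_eq_one_iff] at this
      simp [_root_.relu, hfx, max_eq_left (le_of_lt hpos)]

lemma isSpline_var (v : ι) : IsSpline ι 1 fun x => x v := by
  simpa using isSpline_poly (MvPolynomial.X v) (by simp [MvPolynomial.totalDegree_X])

lemma isSpline_nn {a c : ℕ} {φ : (Fin a → ℝ) → (Fin c → ℝ)} (hφ : IsNN φ) :
    ∀ (g : (ι → ℝ) → Fin a → ℝ), (∀ r, IsSpline ι k fun x => g x r) →
      ∀ i, IsSpline ι k fun x => φ (g x) i := by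
  induction hφ with
  | affine A c =>
    intro g hg i
    simp only [Matrix.mulVec, dotProduct, Pi.add_apply]
    exact (isSpline_sum Finset.univ _ fun r _ => (hg r).const_mul (A i r)).add (isSpline_const _)
  | layer A v hgNN ih =>
    intro g hg i
    refine ih (fun x r => relu (A.mulVec (g x) r + v r)) (fun r => ?_) i
    have : IsSpline ι k fun x => A.mulVec (g x) r + v r := by
      simp only [Matrix.mulVec, dotProduct]
      exact (isSpline_sum Finset.univ _ fun s _ => (hg s).const_mul (A r s)).add (isSpline_const _)
    exact this.relu

variable {n p : ℕ}

lemma isSpline_entry {m' : ℕ} (A : Matrix (Fin m') (Fin n) ℝ) (B : Matrix (Fin m') (Fin p) ℝ)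
    (i : Fin m') (r : Fin p) :
    IsSpline (Fin n × Fin p) 1 fun x => (A * (Matrix.of fun a b => x (a, b)) + B) i r := by
  simp only [Matrix.add_apply, Matrix.mul_apply, Matrix.of_apply]
  exact (isSpline_sum Finset.univ _ fun s _ =>
    (isSpline_var (s, r)).const_mul (A i s)).add (isSpline_const _)

lemma isSpline_attention {d m : ℕ}
    (AQ AK : Matrix (Fin d) (Fin n) ℝ) (AV : Matrix (Fin m) (Fin n) ℝ)
    (BQ BK : Matrix (Fin d) (Fin p) ℝ) (BV : Matrix (Fin m) (Fin p) ℝ)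
    (i : Fin m) (j : Fin p) :
    IsSpline (Fin n × Fin p) 3
      (fun x => attention AQ AK AV BQ BK BV (Matrix.of fun a b => x (a, b)) i j) := by
  have key : ∀ x : Fin n × Fin p → ℝ,
      attention AQ AK AV BQ BK BV (Matrix.of fun a b => x (a, b)) i j =
      ∑ r : Fin p, (AV * (Matrix.of fun a b => x (a, b)) + BV) i r *
        relu (∑ t : Fin d, (AK * (Matrix.of fun a b => x (a, b)) + BK) t r *
          (AQ * (Matrix.of fun a b => x (a, b)) + BQ) t j) := by
    intro x
    simp [attention, Matrix.mul_apply, matRelu, Matrix.transpose_apply, mul_comm]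
  simp only [key]
  refine isSpline_sum Finset.univ _ fun r _ => ?_
  have h1 := isSpline_entry AV BV i r
  have h2 : IsSpline (Fin n × Fin p) 2 fun x =>
      ∑ t : Fin d, (AK * (Matrix.of fun a b => x (a, b)) + BK) t r *
        (AQ * (Matrix.of fun a b => x (a, b)) + BQ) t j :=
    isSpline_sum Finset.univ _ fun t _ =>
      (isSpline_entry AK BK t r).mul (isSpline_entry AQ BQ t j)
  exact h1.mul h2.relu

/-- Every ReLU-activated encoder block — a multihead ReLU attention module followed by a ReLU
feed-forward neural network applied columnwise — is a cubic spline. -/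
theorem encoder_block_is_cubic_spline (n p d m h n' : ℕ)
    (AQ AK : Fin h → Matrix (Fin d) (Fin n) ℝ) (AV : Fin h → Matrix (Fin m) (Fin n) ℝ)
    (BQ BK : Fin h → Matrix (Fin d) (Fin p) ℝ) (BV : Fin h → Matrix (Fin m) (Fin p) ℝ)
    (φ : (Fin (h * m) → ℝ) → (Fin n' → ℝ)) (hφ : IsNN φ) :
    IsMatrixSpline 3 (fun X => colwise φ (multiheadAttention AQ AK AV BQ BK BV X)) := by
  intro i j
  simp only [colwise, Matrix.of_apply]
  refine isSpline_nn hφ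
    (fun x r => multiheadAttention AQ AK AV BQ BK BV (Matrix.of fun a b => x (a, b)) r j)
    (fun r => ?_) i
  simp only [multiheadAttention, Matrix.of_apply]
  exact isSpline_attention _ _ _ _ _ _ _ _
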